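/- Let M be an m×n complex matrix with singular value decomposition M = Σ_{j=1}^{min(m,n)} σ_j(M) u_j v_jᴴ, where σ_1(M) ≥ σ_2(M) ≥ … ≥ 0 and (u_j), (v_j) are orthonormal families in ℂ^m and ℂ^n, and let ρ be an integer with 1 ≤ ρ < min(m,n). Then the ρ-truncation M_ρ = Σ_{j=1}^{ρ} σ_j(M) u_j v_jᴴ satisfies ‖M − M_ρ‖ = σ_{ρ+1}(M), and for every m×n complex matrix N of rank at most ρ one has ‖M − N‖ ≥ σ_{ρ+1}(M), where ‖·‖ denotes the spectral norm; that is, M_ρ is a closest rank-ρ approximation of M in the spectral norm. -/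

import Mathlib

local notation "⟪" x ", " y "⟫" => @inner ℂ _ _ x y

private lemma pythagoras' {ι : Type*} {E : Type*} [NormedAddCommGroup E]
    [InnerProductSpace ℂ E] {f : ι → E} (hf : Orthonormal ℂ f) (c : ι → ℂ) (s : Finset ι) :
    ‖∑ j ∈ s, c j • f j‖ ^ 2 = ∑ j ∈ s, ‖c j‖ ^ 2 := by
  have h2 : (‖∑ j ∈ s, c j • f j‖:ℝ) ^ 2 = RCLike.re (⟪∑ j ∈ s, c j • f j, ∑ j ∈ s, c j • f j⟫) :=
    norm_sq_eq_re_inner _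
  rw [h2, hf.inner_sum c c s]
  simp [RCLike.conj_mul, ← Complex.ofReal_pow]

private lemma onfam {n d : ℕ} (v : Fin d → Fin n → ℂ)
    (hv : ∀ j j' : Fin d, ∑ k, (starRingEnd ℂ) (v j k) * v j' k = if j = j' then 1 else 0) :
    Orthonormal ℂ (fun j => (WithLp.equiv 2 (Fin n → ℂ)).symm (v j)) := by
  rw [orthonormal_iff_ite]
  intro j j'
  simpa [PiLp.inner_apply, RCLike.inner_apply, mul_comm] using hv j j'

private lemma svd_apply {m n d : ℕ} (σ : Fin d → ℝ) (u : Fin d → Fin m → ℂ)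
    (v : Fin d → Fin n → ℂ) (S : Finset (Fin d)) (x : EuclideanSpace ℂ (Fin n)) :
    Matrix.toEuclideanLin
        (∑ j ∈ S, Matrix.of fun i k => (σ j : ℂ) * u j i * (starRingEnd ℂ) (v j k)) x
      = ∑ j ∈ S, ((σ j : ℂ) * ⟪(WithLp.equiv 2 (Fin n → ℂ)).symm (v j), x⟫) •
          (WithLp.equiv 2 (Fin m → ℂ)).symm (u j) := by
  ext i
  rw [WithLp.ofLp_sum, Finset.sum_apply i S]
  simp only [Matrix.toEuclideanLin_apply, Matrix.mulVec, dotProduct, Matrix.sum_apply,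
    Matrix.of_apply, WithLp.equiv_symm_apply, PiLp.toLp_apply,
    PiLp.inner_apply, RCLike.inner_apply, PiLp.smul_apply, smul_eq_mul]
  simp_rw [Finset.sum_mul]
  rw [Finset.sum_comm]
  refine Finset.sum_congr rfl fun j _ => ?_
  rw [Finset.mul_sum, Finset.sum_mul]
  refine Finset.sum_congr rfl fun k _ => ?_
  ring

/-- The spectral norm of a complex matrix: the operator norm of the induced linear map
between Euclidean spaces. -/
noncomputable def matrixSpectralNorm {m n : ℕ} (A : Matrix (Fin m) (Fin n) ℂ) : ℝ :=
  ‖LinearMap.toContinuousLinearMap (Matrix.toEuclideanLin A)‖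

set_option maxHeartbeats 1000000 in
/-- **Eckart–Young in the spectral norm.**  If `M = ∑ σ_j u_j v_jᴴ` is a singular value
decomposition of an `m×n` complex matrix with nonincreasing nonnegative `σ` and orthonormal
families `u`, `v`, and `1 ≤ ρ < min m n`, then the ρ-truncation `Mρ = ∑_{j<ρ} σ_j u_j v_jᴴ`
satisfies `‖M − Mρ‖ = σ_{ρ+1}` and every matrix `N` of rank at most `ρ` satisfies
`‖M − N‖ ≥ σ_{ρ+1}` (0-based: the singular value with index `ρ`). -/
theorem truncated_svd_is_best_spectral_approx {m n ρ : ℕ} (hρ1 : 1 ≤ ρ) (hρ : ρ < min m n)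
    (M : Matrix (Fin m) (Fin n) ℂ)
    (σ : Fin (min m n) → ℝ)
    (u : Fin (min m n) → Fin m → ℂ) (v : Fin (min m n) → Fin n → ℂ)
    (hmono : ∀ i j : Fin (min m n), i ≤ j → σ j ≤ σ i)
    (hnonneg : ∀ j, 0 ≤ σ j)
    (hu : ∀ j j' : Fin (min m n),
      ∑ i, (starRingEnd ℂ) (u j i) * u j' i = if j = j' then 1 else 0)
    (hv : ∀ j j' : Fin (min m n),
      ∑ k, (starRingEnd ℂ) (v j k) * v j' k = if j = j' then 1 else 0)
    (hM : M = ∑ j : Fin (min m n),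
      Matrix.of fun i k => (σ j : ℂ) * u j i * (starRingEnd ℂ) (v j k))
    (Mρ : Matrix (Fin m) (Fin n) ℂ)
    (hMρ : Mρ = ∑ j ∈ Finset.univ.filter (fun j : Fin (min m n) => (j : ℕ) < ρ),
      Matrix.of fun i k => (σ j : ℂ) * u j i * (starRingEnd ℂ) (v j k)) :
    matrixSpectralNorm (M - Mρ) = σ ⟨ρ, hρ⟩ ∧
      ∀ N : Matrix (Fin m) (Fin n) ℂ, N.rank ≤ ρ →
        σ ⟨ρ, hρ⟩ ≤ matrixSpectralNorm (M - N) := by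
  classical
  set V : Fin (min m n) → EuclideanSpace ℂ (Fin n) :=
    fun j => (WithLp.equiv 2 (Fin n → ℂ)).symm (v j) with hV
  set U : Fin (min m n) → EuclideanSpace ℂ (Fin m) :=
    fun j => (WithLp.equiv 2 (Fin m → ℂ)).symm (u j) with hU
  have hVon : Orthonormal ℂ V := onfam v hv
  have hUon : Orthonormal ℂ U := onfam u hu
  have hρ' : ρ + 1 ≤ min m n := hρ
  set r : Fin (min m n) := ⟨ρ, hρ⟩ with hr
  set S : Finset (Fin (min m n)) :=
    Finset.univ.filter (fun j : Fin (min m n) => ¬ (j : ℕ) < ρ) with hS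
  have hdiff : M - Mρ = ∑ j ∈ S,
      Matrix.of fun i k => (σ j : ℂ) * u j i * (starRingEnd ℂ) (v j k) := by
    rw [hM, hMρ, sub_eq_iff_eq_add, add_comm]
    exact (Finset.sum_filter_add_sum_filter_not Finset.univ _ _).symm
  have hTapp : ∀ x : EuclideanSpace ℂ (Fin n),
      (LinearMap.toContinuousLinearMap (Matrix.toEuclideanLin (M - Mρ))) x
        = ∑ j ∈ S, ((σ j : ℂ) * ⟪V j, x⟫) • U j := by
    intro x
    rw [LinearMap.coe_toContinuousLinearMap', hdiff]
    exact svd_apply σ u v S x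
  have hterm : ∀ (j : Fin (min m n)) (x : EuclideanSpace ℂ (Fin n)),
      ‖(σ j : ℂ) * ⟪V j, x⟫‖ ^ 2 = σ j ^ 2 * ‖⟪V j, x⟫‖ ^ 2 := by
    intro j x
    rw [norm_mul, Complex.norm_real, Real.norm_of_nonneg (hnonneg j), mul_pow]
  -- Part 1, upper bound
  have hub : matrixSpectralNorm (M - Mρ) ≤ σ r := by
    unfold matrixSpectralNorm
    apply ContinuousLinearMap.opNorm_le_bound _ (hnonneg r)
    intro x
    have hsq : ‖(LinearMap.toContinuousLinearMap (Matrix.toEuclideanLin (M - Mρ))) x‖ ^ 2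
        ≤ (σ r * ‖x‖) ^ 2 := by
      rw [hTapp, pythagoras' hUon]
      calc ∑ j ∈ S, ‖(σ j : ℂ) * ⟪V j, x⟫‖ ^ 2
          ≤ ∑ j ∈ S, σ r ^ 2 * ‖⟪V j, x⟫‖ ^ 2 := by
            refine Finset.sum_le_sum fun j hj => ?_
            rw [hterm]
            have hjr : r ≤ j := by
              rw [hS, Finset.mem_filter] at hj
              exact Fin.le_def.mpr (Nat.le_of_not_lt hj.2)
            have h2 := hmono r j hjr
            have h3 := hnonneg j
            gcongr
          _ = σ r ^ 2 * ∑ j ∈ S, ‖⟪V j, x⟫‖ ^ 2 := (Finset.mul_sum _ _ _).symm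
          _ ≤ σ r ^ 2 * ‖x‖ ^ 2 := by
            have hb := hVon.sum_inner_products_le (s := S) x
            have : (0:ℝ) ≤ σ r ^ 2 := sq_nonneg _
            exact mul_le_mul_of_nonneg_left hb this
          _ = (σ r * ‖x‖) ^ 2 := (mul_pow _ _ _).symm
    exact (pow_le_pow_iff_left₀ (norm_nonneg _)
      (mul_nonneg (hnonneg r) (norm_nonneg x)) two_ne_zero).mp hsq
  -- Part 1, lower bound
  have hlb : σ r ≤ matrixSpectralNorm (M - Mρ) := by
    have hVr : ‖V r‖ = 1 := hVon.1 r
    have happ : (LinearMap.toContinuousLinearMap (Matrix.toEuclideanLin (M - Mρ))) (V r)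
        = (σ r : ℂ) • U r := by
      rw [hTapp]
      rw [Finset.sum_eq_single r]
      · rw [orthonormal_iff_ite.mp hVon r r, if_pos rfl, mul_one]
      · intro j hj hne
        rw [orthonormal_iff_ite.mp hVon j r, if_neg hne, mul_zero, zero_smul]
      · intro habs
        exfalso
        apply habs
        rw [hS, Finset.mem_filter]
        exact ⟨Finset.mem_univ _, lt_irrefl ρ⟩
    have hle := (LinearMap.toContinuousLinearMap (Matrix.toEuclideanLin (M - Mρ))).le_opNorm (V r)
    rw [happ, hVr, mul_one, norm_smul, Complex.norm_real,
      Real.norm_of_nonneg (hnonneg r), hUon.1 r, mul_one] at hle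
    exact hle
  refine ⟨le_antisymm hub hlb, ?_⟩
  -- Part 2
  intro N hN
  have hrank : Module.finrank ℂ (LinearMap.range (Matrix.toEuclideanLin N)) ≤ ρ := by
    have h1 : N.rank = Module.finrank ℂ (LinearMap.range (Matrix.toEuclideanLin N)) := by
      rw [Matrix.toEuclideanLin_eq_toLin_orthonormal]
      exact Matrix.rank_eq_finrank_range_toLin N _ _
    omega
  set V' : Fin (ρ + 1) → EuclideanSpace ℂ (Fin n) := fun k => V (Fin.castLE hρ' k) with hV'
  have hV'on : Orthonormal ℂ V' := hVon.comp _ (Fin.castLE_injective hρ')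
  set W : Submodule ℂ (EuclideanSpace ℂ (Fin n)) := Submodule.span ℂ (Set.range V') with hW
  have hWrank : Module.finrank ℂ W = ρ + 1 := by
    rw [finrank_span_eq_card hV'on.linearIndependent]
    simp
  set f : W →ₗ[ℂ] EuclideanSpace ℂ (Fin m) := (Matrix.toEuclideanLin N).domRestrict W with hf
  have hfr : Module.finrank ℂ (LinearMap.range f) ≤ ρ := by
    refine le_trans (Submodule.finrank_mono ?_) hrank
    rintro x ⟨y, rfl⟩
    exact ⟨y.1, rfl⟩
  have hker : LinearMap.ker f ≠ ⊥ := by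
    intro h
    have h1 := LinearMap.finrank_range_add_finrank_ker f
    rw [h, finrank_bot, hWrank] at h1
    omega
  obtain ⟨w, hwk, hw0⟩ := Submodule.exists_mem_ne_zero_of_ne_bot hker
  have hgw : Matrix.toEuclideanLin N (w : EuclideanSpace ℂ (Fin n)) = 0 := by
    have := LinearMap.mem_ker.mp hwk
    rwa [hf, LinearMap.domRestrict_apply] at this
  have hw1ne : (w : EuclideanSpace ℂ (Fin n)) ≠ 0 := by
    simpa using hw0
  obtain ⟨c, hc⟩ := (Submodule.mem_span_range_iff_exists_fun ℂ).mp w.2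
  set D : Fin (min m n) → ℂ := fun j => if h : (j : ℕ) < ρ + 1 then c ⟨j, h⟩ else 0 with hD
  have hwD : (w : EuclideanSpace ℂ (Fin n)) = ∑ j, D j • V j := by
    rw [← hc]
    have h1 : ∑ j : Fin (min m n), D j • V j
        = ∑ j ∈ Finset.univ.map (Fin.castLEEmb hρ'), D j • V j := by
      refine (Finset.sum_subset (Finset.subset_univ _) fun j _ hj => ?_).symm
      have hlt : ¬ (j : ℕ) < ρ + 1 := by
        intro h
        exact hj (Finset.mem_map.mpr ⟨⟨(j : ℕ), h⟩, Finset.mem_univ _, Fin.ext rfl⟩)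
      rw [hD]
      simp only [dif_neg hlt, zero_smul]
    rw [h1, Finset.sum_map]
    refine Finset.sum_congr rfl fun k _ => ?_
    have hk : ((Fin.castLEEmb hρ' k : Fin (min m n)) : ℕ) < ρ + 1 := k.2
    rw [hD]
    simp only [dif_pos hk]
    rfl
  have hinner : ∀ j : Fin (min m n), ⟪V j, (w : EuclideanSpace ℂ (Fin n))⟫ = D j := by
    intro j
    rw [hwD]
    exact hVon.inner_right_fintype D j
  have hnormw : ‖(w : EuclideanSpace ℂ (Fin n))‖ ^ 2 = ∑ j, ‖D j‖ ^ 2 := by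
    rw [hwD]
    exact pythagoras' hVon D Finset.univ
  have hMw : Matrix.toEuclideanLin M (w : EuclideanSpace ℂ (Fin n))
      = ∑ j, ((σ j : ℂ) * ⟪V j, (w : EuclideanSpace ℂ (Fin n))⟫) • U j := by
    rw [hM]
    exact svd_apply σ u v Finset.univ _
  have hMwsq : (σ r * ‖(w : EuclideanSpace ℂ (Fin n))‖) ^ 2
      ≤ ‖Matrix.toEuclideanLin M (w : EuclideanSpace ℂ (Fin n))‖ ^ 2 := by
    rw [hMw, pythagoras' hUon, mul_pow, hnormw, Finset.mul_sum]
    refine Finset.sum_le_sum fun j _ => ?_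
    rw [hterm, hinner]
    by_cases h : (j : ℕ) < ρ + 1
    · have hjr : j ≤ r := Fin.le_def.mpr (Nat.lt_succ_iff.mp h)
      have h2 := hmono j r hjr
      have h3 := hnonneg r
      gcongr
    · rw [hD]
      simp only [dif_neg h]
      simp
  have hMwge : σ r * ‖(w : EuclideanSpace ℂ (Fin n))‖
      ≤ ‖Matrix.toEuclideanLin M (w : EuclideanSpace ℂ (Fin n))‖ :=
    (pow_le_pow_iff_left₀ (mul_nonneg (hnonneg r) (norm_nonneg _))
      (norm_nonneg _) two_ne_zero).mp hMwsq
  have hsub : Matrix.toEuclideanLin (M - N) (w : EuclideanSpace ℂ (Fin n))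
      = Matrix.toEuclideanLin M (w : EuclideanSpace ℂ (Fin n)) := by
    rw [map_sub, LinearMap.sub_apply, hgw, sub_zero]
  have hle := (LinearMap.toContinuousLinearMap (Matrix.toEuclideanLin (M - N))).le_opNorm
    (w : EuclideanSpace ℂ (Fin n))
  rw [LinearMap.coe_toContinuousLinearMap', hsub] at hle
  have hfin : σ r * ‖(w : EuclideanSpace ℂ (Fin n))‖
      ≤ matrixSpectralNorm (M - N) * ‖(w : EuclideanSpace ℂ (Fin n))‖ := le_trans hMwge hle
  exact le_of_mul_le_mul_right hfin (norm_pos_iff.mpr hw1ne)
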